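/- arXiv:1709.04212 — 4 statements merged into one kernel-verified Lean document; each statement's English description precedes it below -/
import Mathlib

section
/- Let (xᵢ)ᵢ₌₁^M, (aᵢ)ᵢ₌₁^M, (yⱼ)ⱼ₌₁^N, (bⱼ)ⱼ₌₁^N be real numbers all bounded away from 0 (contained in compact sets not containing 0), and define f_{ij} = xᵢyⱼ - aᵢbⱼ. Then there exist positive constants c, D such that c·(Σⱼ₌₂^N f_{1j}² + Σᵢ₌₂^M f_{i1}² + f_{11}²) ≤ Σᵢ₌₁^M Σⱼ₌₁^N f_{ij}² ≤ D·(Σⱼ₌₂^N f_{1j}² + Σᵢ₌₂^M f_{i1}² + f_{11}²). -/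
private lemma aux_three_sq (A B C p q r : ℝ) :
    (A * p + B * q + C * r) ^ 2 ≤ 3 * ((A * p) ^ 2 + (B * q) ^ 2 + (C * r) ^ 2) := by
  nlinarith [sq_nonneg (A * p - B * q), sq_nonneg (A * p - C * r), sq_nonneg (B * q - C * r)]

private lemma aux_sq_ub {t R : ℝ} (ht : |t| ≤ R) : t ^ 2 ≤ R ^ 2 := by
  have h0 := abs_nonneg t
  calc t ^ 2 = |t| ^ 2 := (sq_abs t).symm
    _ ≤ R ^ 2 := by nlinarith

private lemma aux_sq_lb {t δ : ℝ} (hδ : 0 ≤ δ) (ht : δ ≤ |t|) : δ ^ 2 ≤ t ^ 2 := by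
  calc δ ^ 2 ≤ |t| ^ 2 := by nlinarith
    _ = t ^ 2 := sq_abs t

private lemma aux_mul_sq_ub {t s R : ℝ} (hR : 0 ≤ R) (ht : t ^ 2 ≤ R ^ 2)
    (hs : s ^ 2 ≤ R ^ 2) : (t * s) ^ 2 ≤ R ^ 4 := by
  have h := mul_le_mul ht hs (sq_nonneg s) (by positivity)
  calc (t * s) ^ 2 = t ^ 2 * s ^ 2 := by ring
    _ ≤ R ^ 2 * R ^ 2 := h
    _ = R ^ 4 := by ring

private lemma aux_mul_sq_lb {t s δ : ℝ} (ht : δ ^ 2 ≤ t ^ 2) (hs : δ ^ 2 ≤ s ^ 2) :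
    δ ^ 4 ≤ (t * s) ^ 2 := by
  have h := mul_le_mul ht hs (sq_nonneg δ) (sq_nonneg t)
  calc δ ^ 4 = δ ^ 2 * δ ^ 2 := by ring
    _ ≤ t ^ 2 * s ^ 2 := h
    _ = (t * s) ^ 2 := by ring

/-- Pointwise estimate via the identity
`x₁y₁·f_{ij} = f_{1j}·(xᵢy₁) + f_{i1}·(a₁bⱼ) - (aᵢbⱼ)·f_{11}`. -/
private lemma aux_pointwise (δ R x1 y1 xi yj a1 b1 ai bj : ℝ) (hδ : 0 ≤ δ)
    (hx1 : δ ≤ |x1|) (hy1 : δ ≤ |y1|)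
    (hxi : |xi| ≤ R) (hy1R : |y1| ≤ R) (ha1 : |a1| ≤ R) (hbj : |bj| ≤ R) (hai : |ai| ≤ R) :
    δ ^ 4 * (xi * yj - ai * bj) ^ 2 ≤
      3 * R ^ 4 * ((x1 * yj - a1 * bj) ^ 2 + (xi * y1 - ai * b1) ^ 2
        + (x1 * y1 - a1 * b1) ^ 2) := by
  have hR : 0 ≤ R := le_trans (abs_nonneg xi) hxi
  set p := x1 * yj - a1 * bj with hp
  set q := xi * y1 - ai * b1 with hq
  set r := x1 * y1 - a1 * b1 with hr
  set A := xi * y1 with hA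
  set B := a1 * bj with hB
  set C := -(ai * bj) with hC
  have hu2 : δ ^ 4 ≤ (x1 * y1) ^ 2 :=
    aux_mul_sq_lb (aux_sq_lb hδ hx1) (aux_sq_lb hδ hy1)
  have hA2 : A ^ 2 ≤ R ^ 4 := aux_mul_sq_ub hR (aux_sq_ub hxi) (aux_sq_ub hy1R)
  have hB2 : B ^ 2 ≤ R ^ 4 := aux_mul_sq_ub hR (aux_sq_ub ha1) (aux_sq_ub hbj)
  have hC2 : C ^ 2 ≤ R ^ 4 := by
    have h : C ^ 2 = (ai * bj) ^ 2 := by rw [hC]; ring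
    rw [h]; exact aux_mul_sq_ub hR (aux_sq_ub hai) (aux_sq_ub hbj)
  have hid : (x1 * y1) * (xi * yj - ai * bj) = A * p + B * q + C * r := by
    rw [hA, hB, hC, hp, hq, hr]; ring
  have h1 : δ ^ 4 * (xi * yj - ai * bj) ^ 2 ≤ (x1 * y1) ^ 2 * (xi * yj - ai * bj) ^ 2 :=
    mul_le_mul_of_nonneg_right hu2 (sq_nonneg _)
  have h2 : (x1 * y1) ^ 2 * (xi * yj - ai * bj) ^ 2 = (A * p + B * q + C * r) ^ 2 := by
    calc (x1 * y1) ^ 2 * (xi * yj - ai * bj) ^ 2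
        = ((x1 * y1) * (xi * yj - ai * bj)) ^ 2 := by ring
      _ = _ := by rw [hid]
  have h3 := aux_three_sq A B C p q r
  have hAp : (A * p) ^ 2 ≤ R ^ 4 * p ^ 2 := by
    have h : (A * p) ^ 2 = A ^ 2 * p ^ 2 := by ring
    rw [h]; exact mul_le_mul_of_nonneg_right hA2 (sq_nonneg p)
  have hBq : (B * q) ^ 2 ≤ R ^ 4 * q ^ 2 := by
    have h : (B * q) ^ 2 = B ^ 2 * q ^ 2 := by ring
    rw [h]; exact mul_le_mul_of_nonneg_right hB2 (sq_nonneg q)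
  have hCr : (C * r) ^ 2 ≤ R ^ 4 * r ^ 2 := by
    have h : (C * r) ^ 2 = C ^ 2 * r ^ 2 := by ring
    rw [h]; exact mul_le_mul_of_nonneg_right hC2 (sq_nonneg r)
  calc δ ^ 4 * (xi * yj - ai * bj) ^ 2 ≤ (A * p + B * q + C * r) ^ 2 := h2 ▸ h1
    _ ≤ 3 * ((A * p) ^ 2 + (B * q) ^ 2 + (C * r) ^ 2) := h3
    _ ≤ 3 * (R ^ 4 * p ^ 2 + R ^ 4 * q ^ 2 + R ^ 4 * r ^ 2) := by linarith
    _ = 3 * R ^ 4 * (p ^ 2 + q ^ 2 + r ^ 2) := by ring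

theorem nmf_corner_equiv (M N : ℕ) (hM : 1 ≤ M) (hN : 1 ≤ N) (δ R : ℝ) (hδ : 0 < δ) (hR : δ ≤ R) :
    ∃ c D : ℝ, 0 < c ∧ 0 < D ∧
      ∀ (x a : Fin M → ℝ) (y b : Fin N → ℝ),
        (∀ i, δ ≤ |x i| ∧ |x i| ≤ R) → (∀ i, δ ≤ |a i| ∧ |a i| ≤ R) →
        (∀ j, δ ≤ |y j| ∧ |y j| ≤ R) → (∀ j, δ ≤ |b j| ∧ |b j| ≤ R) →
        c * ((∑ j ∈ Finset.univ.filter (fun j : Fin N => j ≠ ⟨0, hN⟩),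
                (x ⟨0, hM⟩ * y j - a ⟨0, hM⟩ * b j) ^ 2) +
             (∑ i ∈ Finset.univ.filter (fun i : Fin M => i ≠ ⟨0, hM⟩),
                (x i * y ⟨0, hN⟩ - a i * b ⟨0, hN⟩) ^ 2) +
             (x ⟨0, hM⟩ * y ⟨0, hN⟩ - a ⟨0, hM⟩ * b ⟨0, hN⟩) ^ 2)
          ≤ ∑ i : Fin M, ∑ j : Fin N, (x i * y j - a i * b j) ^ 2 ∧
        (∑ i : Fin M, ∑ j : Fin N, (x i * y j - a i * b j) ^ 2)
          ≤ D * ((∑ j ∈ Finset.univ.filter (fun j : Fin N => j ≠ ⟨0, hN⟩),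
                (x ⟨0, hM⟩ * y j - a ⟨0, hM⟩ * b j) ^ 2) +
             (∑ i ∈ Finset.univ.filter (fun i : Fin M => i ≠ ⟨0, hM⟩),
                (x i * y ⟨0, hN⟩ - a i * b ⟨0, hN⟩) ^ 2) +
             (x ⟨0, hM⟩ * y ⟨0, hN⟩ - a ⟨0, hM⟩ * b ⟨0, hN⟩) ^ 2) := by
  classical
  have hM0 : (0 : ℝ) < M := by exact_mod_cast hM
  have hN0 : (0 : ℝ) < N := by exact_mod_cast hN
  have hR0 : (0 : ℝ) < R := lt_of_lt_of_le hδ hR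
  refine ⟨1, 9 * M * N * R ^ 4 / δ ^ 4, one_pos, by positivity, ?_⟩
  intro x a y b hx ha hy hb
  set i0 : Fin M := ⟨0, hM⟩ with hi0
  set j0 : Fin N := ⟨0, hN⟩ with hj0
  have hfilterN : Finset.univ.filter (fun j : Fin N => j ≠ j0) = Finset.univ.erase j0 :=
    Finset.filter_ne' _ _
  have hfilterM : Finset.univ.filter (fun i : Fin M => i ≠ i0) = Finset.univ.erase i0 :=
    Finset.filter_ne' _ _
  rw [hfilterN, hfilterM]
  set Sa : ℝ := ∑ j ∈ Finset.univ.erase j0, ((x i0 * y j - a i0 * b j)) ^ 2 with hSa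
  set Sb : ℝ := ∑ i ∈ Finset.univ.erase i0, ((x i * y j0 - a i * b j0)) ^ 2 with hSb
  have hSa0 : 0 ≤ Sa := Finset.sum_nonneg fun _ _ => sq_nonneg _
  have hSb0 : 0 ≤ Sb := Finset.sum_nonneg fun _ _ => sq_nonneg _
  constructor
  · -- lower bound, c = 1
    rw [one_mul]
    have h1 : ∑ i : Fin M, ∑ j : Fin N, ((x i * y j - a i * b j)) ^ 2
        = (∑ j : Fin N, ((x i0 * y j - a i0 * b j)) ^ 2) + ∑ i ∈ Finset.univ.erase i0, ∑ j : Fin N, ((x i * y j - a i * b j)) ^ 2 :=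
      (Finset.add_sum_erase Finset.univ (fun i => ∑ j : Fin N, ((x i * y j - a i * b j)) ^ 2)
        (Finset.mem_univ i0)).symm
    have h2 : ∑ j : Fin N, ((x i0 * y j - a i0 * b j)) ^ 2 = ((x i0 * y j0 - a i0 * b j0)) ^ 2 + Sa :=
      (Finset.add_sum_erase Finset.univ (fun j => ((x i0 * y j - a i0 * b j)) ^ 2) (Finset.mem_univ j0)).symm
    have h3 : Sb ≤ ∑ i ∈ Finset.univ.erase i0, ∑ j : Fin N, ((x i * y j - a i * b j)) ^ 2 := by
      apply Finset.sum_le_sum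
      intro i _
      exact Finset.single_le_sum (fun j _ => sq_nonneg ((x i * y j - a i * b j))) (Finset.mem_univ j0)
    rw [h1, h2]
    linarith
  · -- upper bound
    set S : ℝ := Sa + Sb + ((x i0 * y j0 - a i0 * b j0)) ^ 2 with hS
    have hS0 : 0 ≤ S := by have := sq_nonneg ((x i0 * y j0 - a i0 * b j0)); rw [hS]; linarith
    have key : ∀ (i : Fin M) (j : Fin N), ((x i * y j - a i * b j)) ^ 2 ≤ 9 * R ^ 4 / δ ^ 4 * S := by
      intro i j
      have hpt := aux_pointwise δ R (x i0) (y j0) (x i) (y j) (a i0) (b j0) (a i) (b j)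
        hδ.le (hx i0).1 (hy j0).1 (hx i).2 (hy j0).2 (ha i0).2 (hb j).2 (ha i).2
      have hpS : ((x i0 * y j - a i0 * b j)) ^ 2 ≤ S := by
        by_cases hjj : j = j0
        · subst hjj; rw [hS]; linarith
        · have h : ((x i0 * y j - a i0 * b j)) ^ 2 ≤ Sa :=
            Finset.single_le_sum (fun j' _ => sq_nonneg ((x i0 * y j' - a i0 * b j')))
              (Finset.mem_erase.2 ⟨hjj, Finset.mem_univ j⟩)
          have hr0 := sq_nonneg ((x i0 * y j0 - a i0 * b j0))
          rw [hS]; linarith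
      have hqS : ((x i * y j0 - a i * b j0)) ^ 2 ≤ S := by
        by_cases hii : i = i0
        · subst hii; rw [hS]; linarith
        · have h : ((x i * y j0 - a i * b j0)) ^ 2 ≤ Sb :=
            Finset.single_le_sum (fun i' _ => sq_nonneg ((x i' * y j0 - a i' * b j0)))
              (Finset.mem_erase.2 ⟨hii, Finset.mem_univ i⟩)
          have hr0 := sq_nonneg ((x i0 * y j0 - a i0 * b j0))
          rw [hS]; linarith
      have hrS : ((x i0 * y j0 - a i0 * b j0)) ^ 2 ≤ S := by rw [hS]; linarith
      have hR4 : (0:ℝ) ≤ 3 * R ^ 4 := by positivity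
      have hfin : δ ^ 4 * ((x i * y j - a i * b j)) ^ 2 ≤ 9 * R ^ 4 * S := by
        have h9 : 3 * R ^ 4 * (((x i0 * y j - a i0 * b j)) ^ 2 + ((x i * y j0 - a i * b j0)) ^ 2 + ((x i0 * y j0 - a i0 * b j0)) ^ 2)
            ≤ 3 * R ^ 4 * (3 * S) := by
          apply mul_le_mul_of_nonneg_left _ hR4
          linarith
        calc δ ^ 4 * ((x i * y j - a i * b j)) ^ 2
            ≤ 3 * R ^ 4 * (((x i0 * y j - a i0 * b j)) ^ 2 + ((x i * y j0 - a i * b j0)) ^ 2 + ((x i0 * y j0 - a i0 * b j0)) ^ 2) := hpt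
          _ ≤ 3 * R ^ 4 * (3 * S) := h9
          _ = 9 * R ^ 4 * S := by ring
      rw [div_mul_eq_mul_div, le_div_iff₀ (by positivity : (0:ℝ) < δ ^ 4)]
      calc ((x i * y j - a i * b j)) ^ 2 * δ ^ 4 = δ ^ 4 * ((x i * y j - a i * b j)) ^ 2 := by ring
        _ ≤ 9 * R ^ 4 * S := hfin
    calc ∑ i : Fin M, ∑ j : Fin N, ((x i * y j - a i * b j)) ^ 2
        ≤ ∑ _i : Fin M, ∑ _j : Fin N, 9 * R ^ 4 / δ ^ 4 * S := by
          apply Finset.sum_le_sum; intro i _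
          exact Finset.sum_le_sum fun j _ => key i j
      _ = (M : ℝ) * ((N : ℝ) * (9 * R ^ 4 / δ ^ 4 * S)) := by
          simp [Finset.sum_const, Finset.card_univ, mul_assoc]
      _ = 9 * ↑M * ↑N * R ^ 4 / δ ^ 4 * S := by
          field_simp
end

section
/- Let xᵢ, yⱼ, aᵢ, bⱼ be real numbers bounded away from 0, and f_{ij} = xᵢyⱼ - aᵢbⱼ. Then for all i ≥ 2, j ≥ 2 there exists a constant C > 0 (depending only on the bounds) such that f_{ij}² ≤ C·(f_{i(j-1)}² + f_{(i-1)j}² + f_{(i-1)(j-1)}²). -/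
theorem nmf_step_bound (δ R : ℝ) (hδ : 0 < δ) (hR : δ ≤ R) :
    ∃ C : ℝ, 0 < C ∧
      ∀ x₁ x₂ y₁ y₂ a₁ a₂ b₁ b₂ : ℝ,
        δ ≤ |x₁| → |x₁| ≤ R → δ ≤ |x₂| → |x₂| ≤ R →
        δ ≤ |y₁| → |y₁| ≤ R → δ ≤ |y₂| → |y₂| ≤ R →
        δ ≤ |a₁| → |a₁| ≤ R → δ ≤ |a₂| → |a₂| ≤ R →
        δ ≤ |b₁| → |b₁| ≤ R → δ ≤ |b₂| → |b₂| ≤ R →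
        (x₂ * y₂ - a₂ * b₂) ^ 2 ≤
          C * ((x₂ * y₁ - a₂ * b₁) ^ 2 + (x₁ * y₂ - a₁ * b₂) ^ 2 +
               (x₁ * y₁ - a₁ * b₁) ^ 2) := by
  have hR0 : 0 < R := lt_of_lt_of_le hδ hR
  refine ⟨3 * R ^ 4 / δ ^ 4, by positivity, ?_⟩
  intro x₁ x₂ y₁ y₂ a₁ a₂ b₁ b₂ hx₁ hx₁' hx₂ hx₂' hy₁ hy₁' hy₂ hy₂' ha₁ ha₁' ha₂ ha₂' hb₁ hb₁' hb₂ hb₂'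
  have sq_lb : ∀ t : ℝ, δ ≤ |t| → δ ^ 2 ≤ t ^ 2 := fun t ht =>
    (sq_abs t) ▸ pow_le_pow_left₀ hδ.le ht 2
  have sq_ub : ∀ t : ℝ, |t| ≤ R → t ^ 2 ≤ R ^ 2 := fun t ht =>
    (sq_abs t) ▸ pow_le_pow_left₀ (abs_nonneg t) ht 2
  have hx1l := sq_lb x₁ hx₁
  have hy1l := sq_lb y₁ hy₁
  have hx1u := sq_ub x₁ hx₁'
  have hy2u := sq_ub y₂ hy₂'
  have ha2u := sq_ub a₂ ha₂'
  have hb1u := sq_ub b₁ hb₁'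
  have hb2u := sq_ub b₂ hb₂'
  have bound : ∀ p q f : ℝ, p ^ 2 ≤ R ^ 2 → q ^ 2 ≤ R ^ 2 →
      (p * q * f) ^ 2 ≤ R ^ 4 * f ^ 2 := by
    intro p q f hp hq
    have h := mul_le_mul_of_nonneg_right
      (mul_le_mul hp hq (sq_nonneg q) (by positivity)) (sq_nonneg f)
    calc (p * q * f) ^ 2 = p ^ 2 * q ^ 2 * f ^ 2 := by ring
      _ ≤ R ^ 2 * R ^ 2 * f ^ 2 := h
      _ = R ^ 4 * f ^ 2 := by ring
  have hu := bound x₁ y₂ (x₂ * y₁ - a₂ * b₁) hx1u hy2u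
  have hv := bound a₂ b₁ (x₁ * y₂ - a₁ * b₂) ha2u hb1u
  have hw := bound a₂ b₂ (x₁ * y₁ - a₁ * b₁) ha2u hb2u
  set u := x₁ * y₂ * (x₂ * y₁ - a₂ * b₁)
  set v := a₂ * b₁ * (x₁ * y₂ - a₁ * b₂)
  set w := a₂ * b₂ * (x₁ * y₁ - a₁ * b₁)
  have key : x₁ * y₁ * (x₂ * y₂ - a₂ * b₂) = u + v - w := by
    simp only [u, v, w]; ring
  have h3 : (u + v - w) ^ 2 ≤ 3 * (u ^ 2 + v ^ 2 + w ^ 2) := by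
    nlinarith [sq_nonneg (u - v), sq_nonneg (u + w), sq_nonneg (v + w)]
  have hsum : (x₁ * y₁ * (x₂ * y₂ - a₂ * b₂)) ^ 2 ≤
      3 * R ^ 4 * ((x₂ * y₁ - a₂ * b₁) ^ 2 + (x₁ * y₂ - a₁ * b₂) ^ 2 +
        (x₁ * y₁ - a₁ * b₁) ^ 2) := by
    rw [key]; linarith
  have hδ4 : δ ^ 4 ≤ (x₁ * y₁) ^ 2 := by
    have h := mul_le_mul hx1l hy1l (by positivity) (sq_nonneg x₁)
    calc δ ^ 4 = δ ^ 2 * δ ^ 2 := by ring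
      _ ≤ x₁ ^ 2 * y₁ ^ 2 := h
      _ = (x₁ * y₁) ^ 2 := by ring
  have hδ4' : δ ^ 4 * (x₂ * y₂ - a₂ * b₂) ^ 2 ≤ (x₁ * y₁ * (x₂ * y₂ - a₂ * b₂)) ^ 2 := by
    have := mul_le_mul_of_nonneg_right hδ4 (sq_nonneg (x₂ * y₂ - a₂ * b₂))
    calc δ ^ 4 * (x₂ * y₂ - a₂ * b₂) ^ 2 ≤ (x₁ * y₁) ^ 2 * (x₂ * y₂ - a₂ * b₂) ^ 2 := this
      _ = (x₁ * y₁ * (x₂ * y₂ - a₂ * b₂)) ^ 2 := by ring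
  rw [div_mul_eq_mul_div, le_div_iff₀ (by positivity : (0:ℝ) < δ ^ 4)]
  linarith [hsum, hδ4']
end

section
/- In the ring ℝ[x₁,…,x_M, y₁,…,y_N, a₁,…,a_M, b₁,…,b_N] localized so that x₁ and y₁ are invertible (or working over the field of fractions), the ideal generated by all f_{ij} = xᵢyⱼ - aᵢbⱼ for 1 ≤ i ≤ M, 1 ≤ j ≤ N equals the ideal generated by f₁₁, f₂₁, …, f_{M1}, f₁₂, …, f_{1N}. -/
open MvPolynomial

theorem nmf_ideal_localization (M N : ℕ) (hM : 1 ≤ M) (hN : 1 ≤ N) :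
    let R := MvPolynomial (Fin M ⊕ Fin N ⊕ Fin M ⊕ Fin N) ℝ
    let x : Fin M → R := fun i => X (Sum.inl i)
    let y : Fin N → R := fun j => X (Sum.inr (Sum.inl j))
    let a : Fin M → R := fun i => X (Sum.inr (Sum.inr (Sum.inl i)))
    let b : Fin N → R := fun j => X (Sum.inr (Sum.inr (Sum.inr j)))
    let f : Fin M → Fin N → R := fun i j => x i * y j - a i * b j
    let S : Submonoid R := Submonoid.powers (x ⟨0, hM⟩ * y ⟨0, hN⟩)
    let L := Localization S
    Ideal.span (Set.range (fun p : Fin M × Fin N => algebraMap R L (f p.1 p.2))) =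
      Ideal.span (Set.range (fun i : Fin M => algebraMap R L (f i ⟨0, hN⟩)) ∪
                  Set.range (fun j : Fin N => algebraMap R L (f ⟨0, hM⟩ j))) := by
  intro R x y a b f S L
  apply le_antisymm
  · rw [Ideal.span_le]
    rintro _ ⟨⟨i, j⟩, rfl⟩
    simp only
    have hu : IsUnit (algebraMap R L (x ⟨0, hM⟩ * y ⟨0, hN⟩)) :=
      IsLocalization.map_units L ⟨x ⟨0, hM⟩ * y ⟨0, hN⟩, Submonoid.mem_powers _⟩
    rw [SetLike.mem_coe, ← Ideal.unit_mul_mem_iff_mem _ hu]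
    have key : (x ⟨0, hM⟩ * y ⟨0, hN⟩) * f i j =
        (x i * y ⟨0, hN⟩) * f ⟨0, hM⟩ j + (a ⟨0, hM⟩ * b j) * f i ⟨0, hN⟩
          - (a i * b j) * f ⟨0, hM⟩ ⟨0, hN⟩ := by
      simp only [f]; ring
    rw [← map_mul, key]
    simp only [map_sub, map_add, map_mul]
    have h1 : algebraMap R L (f ⟨0, hM⟩ j) ∈
        Ideal.span (Set.range (fun i : Fin M => algebraMap R L (f i ⟨0, hN⟩)) ∪
          Set.range (fun j : Fin N => algebraMap R L (f ⟨0, hM⟩ j))) :=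
      Ideal.subset_span (Set.mem_union_right _ ⟨j, rfl⟩)
    have h2 : algebraMap R L (f i ⟨0, hN⟩) ∈
        Ideal.span (Set.range (fun i : Fin M => algebraMap R L (f i ⟨0, hN⟩)) ∪
          Set.range (fun j : Fin N => algebraMap R L (f ⟨0, hM⟩ j))) :=
      Ideal.subset_span (Set.mem_union_left _ ⟨i, rfl⟩)
    have h3 : algebraMap R L (f ⟨0, hM⟩ ⟨0, hN⟩) ∈
        Ideal.span (Set.range (fun i : Fin M => algebraMap R L (f i ⟨0, hN⟩)) ∪
          Set.range (fun j : Fin N => algebraMap R L (f ⟨0, hM⟩ j))) :=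
      Ideal.subset_span (Set.mem_union_left _ ⟨⟨0, hM⟩, rfl⟩)
    exact Ideal.sub_mem _ (Ideal.add_mem _ (Ideal.mul_mem_left _ _ h1)
      (Ideal.mul_mem_left _ _ h2)) (Ideal.mul_mem_left _ _ h3)
  · rw [Ideal.span_le]
    rintro _ (⟨i, rfl⟩ | ⟨j, rfl⟩)
    · exact Ideal.subset_span ⟨(i, ⟨0, hN⟩), rfl⟩
    · exact Ideal.subset_span ⟨(⟨0, hM⟩, j), rfl⟩
end

section
/- Let M ≥ 2, N ≥ 2, H ≥ H₀ ≥ 1 be natural numbers, and let λ̄ = (1/2)[M - 1 + (H₀-1)(M+N-3) + (H-H₀)·min{M-1, N}] and d = H(M+N) - H - N. Then 2λ̄ ≤ d, i.e., λ̄ ≤ d/2, with equality if and only if H = H₀ = 1. -/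
theorem rlct_bound_nontrivial (M N H H₀ : ℕ) (hM : 2 ≤ M) (hN : 2 ≤ N)
    (hH₀ : 1 ≤ H₀) (hH : H₀ ≤ H) :
    (M - 1) + (H₀ - 1) * (M + N - 3) + (H - H₀) * min (M - 1) N
      ≤ H * (M + N) - H - N ∧
    ((M - 1) + (H₀ - 1) * (M + N - 3) + (H - H₀) * min (M - 1) N
      = H * (M + N) - H - N ↔ H = 1 ∧ H₀ = 1) := by
  obtain ⟨m, rfl⟩ := Nat.exists_eq_add_of_le hM
  obtain ⟨n, rfl⟩ := Nat.exists_eq_add_of_le hN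
  obtain ⟨k, rfl⟩ := Nat.exists_eq_add_of_le hH₀
  obtain ⟨j, rfl⟩ := Nat.exists_eq_add_of_le hH
  have e1 : 2 + m - 1 = 1 + m := by omega
  have e2 : (2 + m) + (2 + n) - 3 = 1 + m + n := by omega
  have e3 : 1 + k - 1 = k := by omega
  have e4 : 1 + k + j - (1 + k) = j := by omega
  rw [e1, e2, e3, e4]
  rcases le_total (1 + m) (2 + n) with h | h
  · rw [min_eq_left h]
    have key : (1 + k + j) * ((2 + m) + (2 + n))
        = ((1 + m) + k * (1 + m + n) + j * (1 + m)) + (2 * k + j * (2 + n))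
          + (1 + k + j) + (2 + n) := by ring
    rw [key]
    generalize k * (1 + m + n) = a
    generalize j * (1 + m) = b
    generalize hj : j * (2 + n) = c
    have hc : c = 0 ↔ j = 0 := by constructor <;> intro h' <;> [skip; simp [h', ← hj]] <;> nlinarith [hj]
    constructor
    · omega
    · rw [show (1 + k + j = 1 ∧ 1 + k = 1) ↔ (k = 0 ∧ j = 0) by omega]
      omega
  · rw [min_eq_right h]
    have key : (1 + k + j) * ((2 + m) + (2 + n))
        = ((1 + m) + k * (1 + m + n) + j * (2 + n)) + (2 * k + j * (1 + m))
          + (1 + k + j) + (2 + n) := by ring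
    rw [key]
    generalize k * (1 + m + n) = a
    generalize j * (2 + n) = b
    generalize hj : j * (1 + m) = c
    have hc : c = 0 ↔ j = 0 := by constructor <;> intro h' <;> [skip; simp [h', ← hj]] <;> nlinarith [hj]
    constructor
    · omega
    · rw [show (1 + k + j = 1 ∧ 1 + k = 1) ↔ (k = 0 ∧ j = 0) by omega]
      omega
end
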